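/- Let f : ℂ → ℂ be holomorphic on the open unit disk, continuous on the closed unit disk, and suppose conj(ζ)·f(ζ) is real for every ζ with |ζ| = 1. Then there exist a ∈ ℂ and b ∈ ℝ such that f(ζ) = a + b·ζ + conj(a)·ζ² for every ζ in the closed unit disk. In particular, the space of such f is a real vector space of dimension 3. -/

import Mathlib

open Metric Complex Set

/-- If `f : ℂ → ℂ` is holomorphic on the open unit disk, continuous on the closed
unit disk, and `conj ζ * f ζ` is real for every `ζ` on the boundary circle, then
`f ζ = a + b ζ + conj a ζ²` for some `a ∈ ℂ` and `b ∈ ℝ`. -/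
theorem holomorphic_disk_real_twisted_boundary
    (f : ℂ → ℂ)
    (hdiff : DifferentiableOn ℂ f (Metric.ball (0 : ℂ) 1))
    (hcont : ContinuousOn f (Metric.closedBall (0 : ℂ) 1))
    (hbd : ∀ ζ : ℂ, ‖ζ‖ = 1 → ((starRingEnd ℂ) ζ * f ζ).im = 0) :
    ∃ (a : ℂ) (b : ℝ), ∀ ζ ∈ Metric.closedBall (0 : ℂ) 1,
      f ζ = a + (b : ℂ) * ζ + (starRingEnd ℂ) a * ζ ^ 2 := by
  set a := f 0 with ha
  set h : ℂ → ℂ := fun ζ => f ζ - a - (starRingEnd ℂ) a * ζ ^ 2 with hh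
  have h0 : h 0 = 0 := by simp [hh, ha]
  have hhd : DifferentiableOn ℂ h (ball (0 : ℂ) 1) := by
    apply hdiff.sub_const _ |>.sub
    exact (differentiableOn_const _).mul (differentiableOn_id.pow 2)
  have hhc : ContinuousOn h (closedBall (0 : ℂ) 1) := by
    apply (hcont.sub continuousOn_const).sub
    exact (continuousOn_const.mul ((continuousOn_id.pow 2)))
  set g : ℂ → ℂ := dslope h 0 with hg
  have hmem : ball (0 : ℂ) 1 ∈ nhds (0 : ℂ) :=
    (isOpen_ball).mem_nhds (by simp)
  have hgd : DifferentiableOn ℂ g (ball (0 : ℂ) 1) :=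
    (Complex.differentiableOn_dslope hmem).2 hhd
  -- g equals z⁻¹ * h z away from 0
  have hgne : ∀ z : ℂ, z ≠ 0 → g z = z⁻¹ * h z := by
    intro z hz
    rw [hg, dslope_of_ne _ hz, slope_def_field, h0, sub_zero, sub_zero, div_eq_inv_mul]
  have hgc : ContinuousOn g (closedBall (0 : ℂ) 1) := by
    intro z hz
    by_cases hz0 : z = 0
    · subst hz0
      exact ((hgd 0 (by simp)).differentiableAt hmem).continuousAt.continuousWithinAt
    · have hF : ContinuousWithinAt (fun w : ℂ => w⁻¹ * h w) (closedBall (0:ℂ) 1) z :=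
        ((continuousAt_inv₀ hz0).continuousWithinAt).mul (hhc z hz)
      apply hF.congr_of_eventuallyEq _ (hgne z hz0)
      filter_upwards [mem_nhdsWithin_of_mem_nhds ((isOpen_ne : IsOpen {w : ℂ | w ≠ 0}).mem_nhds hz0)]
        with w hw
      exact hgne w hw
  -- boundary: Im (g ζ) = 0 on the unit circle
  have hgbd : ∀ ζ : ℂ, ‖ζ‖ = 1 → (g ζ).im = 0 := by
    intro ζ hζ
    have hζ0 : ζ ≠ 0 := by
      intro h'; rw [h'] at hζ; simp at hζ
    have hinv : ζ⁻¹ = (starRingEnd ℂ) ζ := by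
      rw [Complex.inv_def, Complex.normSq_eq_norm_sq, hζ]
      simp
    have hc2 : (starRingEnd ℂ) ζ * ζ = 1 := by
      rw [mul_comm, Complex.mul_conj, Complex.normSq_eq_norm_sq, hζ]; norm_num
    have hgζ : g ζ = (starRingEnd ℂ) ζ * f ζ
        - ((starRingEnd ℂ) ((starRingEnd ℂ) a * ζ) + (starRingEnd ℂ) a * ζ) := by
      rw [hgne ζ hζ0, hinv, hh]
      simp only [map_mul, Complex.conj_conj]
      have h2 : (starRingEnd ℂ) ζ * ((starRingEnd ℂ) a * ζ ^ 2) = (starRingEnd ℂ) a * ζ := by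
        rw [pow_two, show (starRingEnd ℂ) ζ * ((starRingEnd ℂ) a * (ζ * ζ)) =
          ((starRingEnd ℂ) ζ * ζ) * ((starRingEnd ℂ) a * ζ) by ring, hc2, one_mul]
      rw [mul_sub, mul_sub, h2]
      ring
    have him2 : ((starRingEnd ℂ) ((starRingEnd ℂ) a * ζ) + (starRingEnd ℂ) a * ζ).im = 0 := by
      simp [Complex.add_im]; ring
    rw [hgζ, Complex.sub_im, hbd ζ hζ, him2, sub_zero]
  -- Max modulus: Im g = 0 on the closed ball
  have hdc : DiffContOnCl ℂ g (ball (0 : ℂ) 1) :=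
    ⟨hgd, by rwa [closure_ball (0:ℂ) one_ne_zero]⟩
  have key : ∀ s : ℝ, ∀ z ∈ closedBall (0:ℂ) 1, -s * (g z).im ≤ 0 := by
    intro s z hz
    have hcl : z ∈ closure (ball (0:ℂ) 1) := by
      rwa [closure_ball (0:ℂ) one_ne_zero]
    have hdce : DiffContOnCl ℂ (fun z => Complex.exp ((s:ℂ) * Complex.I * g z))
        (ball (0:ℂ) 1) :=
      ⟨(hgd.const_mul _).cexp, (continuousOn_const.mul hdc.continuousOn).cexp⟩
    have hre : ∀ w : ℂ, ((s:ℂ) * Complex.I * g w).re = -s * (g w).im := by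
      intro w; simp [Complex.mul_re, Complex.mul_im]
    have hb : ‖Complex.exp ((s:ℂ) * Complex.I * g z)‖ ≤ 1 := by
      refine Complex.norm_le_of_forall_mem_frontier_norm_le isBounded_ball hdce ?_ hcl
      intro w hw
      rw [frontier_ball (0:ℂ) one_ne_zero, mem_sphere_zero_iff_norm] at hw
      have himw : (g w).im = 0 := hgbd w hw
      rw [Complex.norm_exp, hre w, himw]
      simp
    rw [Complex.norm_exp, hre z] at hb
    exact Real.exp_le_one_iff.1 hb
  have him : ∀ z ∈ closedBall (0:ℂ) 1, (g z).im = 0 := by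
    intro z hz
    have h1 := key 1 z hz
    have h2 := key (-1) z hz
    nlinarith
  -- g is constant on the ball
  have hana : AnalyticOnNhd ℂ g (ball (0:ℂ) 1) := hgd.analyticOnNhd isOpen_ball
  have hconn : IsPreconnected (ball (0:ℂ) 1) := (convex_ball (0:ℂ) 1).isPreconnected
  rcases hana.is_constant_or_isOpen hconn with ⟨w, hw⟩ | hopen
  · -- constant case
    have hwim : w.im = 0 := by
      have := him 0 (by simp)
      rw [hw 0 (by simp)] at this
      exact this
    refine ⟨a, w.re, ?_⟩
    have heq : Set.EqOn f (fun ζ => a + ((w.re : ℝ) : ℂ) * ζ + (starRingEnd ℂ) a * ζ ^ 2)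
        (ball (0:ℂ) 1) := by
      intro z hz
      have hwz : (w.re : ℂ) = w := by
        apply Complex.ext <;> simp [hwim]
      by_cases hz0 : z = 0
      · subst hz0; simp [ha]
      · have hinvz : z⁻¹ * h z = w := by rw [← hgne z hz0, hw z hz]
        have hhz : h z = w * z := by
          have := congrArg (fun t => z * t) hinvz
          simp only [← mul_assoc, mul_inv_cancel₀ hz0, one_mul] at this
          rw [this]; ring
        rw [hh] at hhz
        simp only at hhz
        show f z = a + ((w.re : ℝ) : ℂ) * z + (starRingEnd ℂ) a * z ^ 2
        rw [hwz]
        linear_combination hhz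
    have hfinal := heq.of_subset_closure hcont ?cg ball_subset_closedBall
      (by rw [closure_ball (0:ℂ) one_ne_zero])
    · exact fun ζ hζ => hfinal hζ
    · apply ContinuousOn.add
      apply ContinuousOn.add continuousOn_const
      · exact continuousOn_const.mul continuousOn_id
      · exact continuousOn_const.mul (continuousOn_id.pow 2)
  · -- open case: impossible since image has im = 0
    exfalso
    have hop : IsOpen (g '' ball (0:ℂ) 1) :=
      hopen _ (subset_refl _) isOpen_ball
    have h0mem : g 0 ∈ g '' ball (0:ℂ) 1 := ⟨0, by simp, rfl⟩
    rcases Metric.isOpen_iff.1 hop _ h0mem with ⟨ε, hε, hball⟩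
    have hmem2 : g 0 + ((ε/2 : ℝ) : ℂ) * Complex.I ∈ g '' ball (0:ℂ) 1 := by
      apply hball
      rw [mem_ball, dist_eq_norm]
      simp only [add_sub_cancel_left]
      rw [norm_mul, Complex.norm_I, mul_one, Complex.norm_real, Real.norm_eq_abs,
        abs_of_pos (by linarith)]
      linarith
    rcases hmem2 with ⟨z, hz, hgz⟩
    have himz : (g z).im = (g 0).im + ε/2 := by
      rw [hgz]; simp [Complex.add_im, Complex.mul_im]
    have h1 : (g z).im = 0 := him z (ball_subset_closedBall hz)
    have h2 : (g 0).im = 0 := him 0 (by simp)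
    rw [h1, h2] at himz
    linarith
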